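/- With SG = ∗_{x∈X} SG_x as above, let Ŷ = {g x̂ g⁻¹ : g ∈ F(X), x ∈ X} ⊂ SG and let F⁺(Ŷ) be the free monoid on Ŷ. Then SG decomposes as a semidirect product SG = F⁺(Ŷ) ⋊ F(X), where F(X) acts on F⁺(Ŷ) by conjugation. -/

import Mathlib

/-- `SG = ∗_{x ∈ X} SG_x`, the free product of copies `SG_x ≅ ℤ × ℕ` (written
multiplicatively), with generators `x = (1,0)`, `x⁻¹ = (-1,0)` and `x̂ = (0,1)`. -/
abbrev SGMonoid (X : Type*) := Monoid.CoprodI (fun _ : X => Multiplicative (ℤ × ℕ))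

/-- The generator `x` of the copy `SG_x` in `SG`. -/
def sgX {X : Type*} (x : X) : SGMonoid X :=
  Monoid.CoprodI.of (i := x) (Multiplicative.ofAdd ((1 : ℤ), (0 : ℕ)))

/-- The generator `x⁻¹` of the copy `SG_x` in `SG`. -/
def sgXinv {X : Type*} (x : X) : SGMonoid X :=
  Monoid.CoprodI.of (i := x) (Multiplicative.ofAdd ((-1 : ℤ), (0 : ℕ)))

/-- The generator `x̂` of the copy `SG_x` in `SG`. -/
def sgXhat {X : Type*} (x : X) : SGMonoid X :=
  Monoid.CoprodI.of (i := x) (Multiplicative.ofAdd ((0 : ℤ), (1 : ℕ)))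

/-- The generator `x` of `SG`, as a unit (with inverse `x⁻¹`). -/
def sgXUnit {X : Type*} (x : X) : (SGMonoid X)ˣ where
  val := sgX x
  inv := sgXinv x
  val_inv := by
    rw [sgX, sgXinv, ← map_mul, ← ofAdd_add]
    norm_num
    exact map_one _
  inv_val := by
    rw [sgX, sgXinv, ← map_mul, ← ofAdd_add]
    norm_num
    exact map_one _

/-- The natural embedding `F(X) → SG` sending each generator to `x` (a unit of `SG`). -/
def freeGroupToSG {X : Type*} : FreeGroup X →* SGMonoid X :=
  (Units.coeHom (SGMonoid X)).comp (FreeGroup.lift (fun x : X => sgXUnit x))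

/-- `Ŷ = {g x̂ g⁻¹ ; g ∈ F(X), x ∈ X} ⊆ SG`. -/
def YhatSet (X : Type*) : Set (SGMonoid X) :=
  {u | ∃ (g : FreeGroup X) (x : X),
    u = freeGroupToSG g * sgXhat x * freeGroupToSG g⁻¹}

namespace SGAux

variable {X : Type*}

@[simp] lemma fg_mul_inv (g : FreeGroup X) :
    freeGroupToSG g * freeGroupToSG g⁻¹ = 1 := by
  rw [← map_mul, mul_inv_cancel, map_one]

@[simp] lemma fg_inv_mul (g : FreeGroup X) :
    freeGroupToSG g⁻¹ * freeGroupToSG g = 1 := by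
  rw [← map_mul, inv_mul_cancel, map_one]

@[simp] lemma fg_mul_inv_cancel_left (g : FreeGroup X) (s : SGMonoid X) :
    freeGroupToSG g * (freeGroupToSG g⁻¹ * s) = s := by
  rw [← mul_assoc, fg_mul_inv, one_mul]

@[simp] lemma fg_inv_mul_cancel_left (g : FreeGroup X) (s : SGMonoid X) :
    freeGroupToSG g⁻¹ * (freeGroupToSG g * s) = s := by
  rw [← mul_assoc, fg_inv_mul, one_mul]

@[simp] lemma fg_of (x : X) : freeGroupToSG (FreeGroup.of x) = sgX x := by
  simp [freeGroupToSG]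
  rfl

@[simp] lemma fg_of_inv (x : X) : freeGroupToSG ((FreeGroup.of x)⁻¹) = sgXinv x := by
  simp [freeGroupToSG]
  rfl

lemma conj_mem (g : FreeGroup X) (y : YhatSet X) :
    freeGroupToSG g * (y : SGMonoid X) * freeGroupToSG g⁻¹ ∈ YhatSet X := by
  obtain ⟨h, x, hy⟩ := y.2
  exact ⟨g * h, x, by rw [hy, mul_inv_rev, map_mul, map_mul]; simp [mul_assoc]⟩

/-- Conjugation action of `F(X)` on `Ŷ`. -/
def conjAct (g : FreeGroup X) (y : YhatSet X) : YhatSet X :=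
  ⟨_, conj_mem g y⟩

@[simp] lemma conjAct_val (g : FreeGroup X) (y : YhatSet X) :
    (conjAct g y : SGMonoid X) = freeGroupToSG g * (y : SGMonoid X) * freeGroupToSG g⁻¹ := rfl

lemma conjAct_one (y : YhatSet X) : conjAct (1 : FreeGroup X) y = y := by
  apply Subtype.ext
  simp

lemma conjAct_mul (g h : FreeGroup X) (y : YhatSet X) :
    conjAct (g * h) y = conjAct g (conjAct h y) := by
  apply Subtype.ext
  simp [mul_inv_rev, map_mul, mul_assoc]

/-- The action of `F(X)` on the free monoid on `Ŷ`. -/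
def A (g : FreeGroup X) : FreeMonoid (YhatSet X) →* FreeMonoid (YhatSet X) :=
  FreeMonoid.map (conjAct g)

lemma A_one (w : FreeMonoid (YhatSet X)) : A (1 : FreeGroup X) w = w := by
  have : A (1 : FreeGroup X) = MonoidHom.id _ := by
    apply FreeMonoid.hom_eq
    intro y
    simp [A, conjAct_one]
  rw [this]; rfl

lemma A_mul (g h : FreeGroup X) (w : FreeMonoid (YhatSet X)) :
    A (g * h) w = A g (A h w) := by
  have : A (g * h) = (A g).comp (A h) := by
    apply FreeMonoid.hom_eq
    intro y
    simp [A, conjAct_mul]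
  rw [this]; rfl

/-- The semidirect product `F⁺(Ŷ) ⋊ F(X)` as a type. -/
structure SD (X : Type*) where
  w : FreeMonoid (YhatSet X)
  g : FreeGroup X

instance : Monoid (SD X) where
  mul p q := ⟨p.w * A p.g q.w, p.g * q.g⟩
  one := ⟨1, 1⟩
  one_mul := by
    rintro ⟨w, g⟩
    show SD.mk ((1 : FreeMonoid (YhatSet X)) * A 1 w) (1 * g) = SD.mk w g
    rw [A_one, one_mul, one_mul]
  mul_one := by
    rintro ⟨w, g⟩
    show SD.mk (w * A g (1 : FreeMonoid (YhatSet X))) (g * 1) = SD.mk w g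
    rw [map_one, mul_one, mul_one]
  mul_assoc := by
    rintro ⟨w1, g1⟩ ⟨w2, g2⟩ ⟨w3, g3⟩
    show SD.mk ((w1 * A g1 w2) * A (g1 * g2) w3) ((g1 * g2) * g3) =
      SD.mk (w1 * A g1 (w2 * A g2 w3)) (g1 * (g2 * g3))
    rw [A_mul, map_mul, mul_assoc, mul_assoc]

@[simp] lemma SD.mul_def (p q : SD X) : p * q = ⟨p.w * A p.g q.w, p.g * q.g⟩ := rfl

@[simp] lemma SD.one_def : (1 : SD X) = ⟨1, 1⟩ := rfl

/-- `x̂` as an element of `Ŷ`. -/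
def hatGen (x : X) : YhatSet X :=
  ⟨sgXhat x, 1, x, by rw [inv_one, map_one, one_mul, mul_one]⟩

@[simp] lemma hatGen_val (x : X) : (hatGen x : SGMonoid X) = sgXhat x := rfl

lemma fg_pow (x : X) (n : ℤ) :
    freeGroupToSG (FreeGroup.of x ^ n) =
      Monoid.CoprodI.of (i := x) (Multiplicative.ofAdd ((n : ℤ), (0 : ℕ))) := by
  induction n using Int.induction_on with
  | zero => rw [zpow_zero, map_one]; norm_num; exact (map_one _).symm
  | succ k ih =>
      rw [zpow_add, zpow_one, map_mul, ih, fg_of, sgX, ← map_mul, ← ofAdd_add]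
      norm_num
  | pred k ih =>
      rw [sub_eq_add_neg, zpow_add, map_mul, ih, zpow_neg_one, fg_of_inv, sgXinv,
        ← map_mul, ← ofAdd_add]
      norm_num

lemma conjAct_pow_hat (x : X) (n : ℤ) :
    conjAct (FreeGroup.of x ^ n) (hatGen x) = hatGen x := by
  apply Subtype.ext
  rw [conjAct_val, hatGen_val, ← zpow_neg, fg_pow, fg_pow, sgXhat, ← map_mul, ← map_mul,
    ← ofAdd_add, ← ofAdd_add]
  norm_num

/-- The component homomorphism `SG_x → F⁺(Ŷ) ⋊ F(X)`. -/
def toSDx (x : X) : Multiplicative (ℤ × ℕ) →* SD X where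
  toFun p := ⟨FreeMonoid.of (hatGen x) ^ (p.toAdd.2), FreeGroup.of x ^ (p.toAdd.1)⟩
  map_one' := by
    show SD.mk (_ ^ (0 : ℕ)) (_ ^ (0 : ℤ)) = 1
    rw [pow_zero, zpow_zero, SD.one_def]
  map_mul' p q := by
    show SD.mk (_ ^ (p.toAdd.2 + q.toAdd.2)) (_ ^ (p.toAdd.1 + q.toAdd.1)) = _
    rw [SD.mul_def]
    congr 1
    · rw [pow_add]
      congr 1
      rw [A, map_pow, FreeMonoid.map_of, conjAct_pow_hat]
    · rw [zpow_add]

/-- The inverse homomorphism `SG → F⁺(Ŷ) ⋊ F(X)`. -/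
def Psi : SGMonoid X →* SD X :=
  Monoid.CoprodI.lift (fun x => toSDx x)

lemma Psi_hat (x : X) : Psi (sgXhat x) = ⟨FreeMonoid.of (hatGen x), 1⟩ := by
  rw [sgXhat, Psi, Monoid.CoprodI.lift_of]
  show SD.mk (_ ^ (1 : ℕ)) (_ ^ (0 : ℤ)) = _
  rw [pow_one, zpow_zero]

lemma Psi_fg (g : FreeGroup X) : Psi (freeGroupToSG g) = ⟨1, g⟩ := by
  induction g using FreeGroup.induction_on with
  | C1 => rw [map_one, map_one]; rfl
  | of x =>
      rw [fg_of, sgX, Psi,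
        Monoid.CoprodI.lift_of]
      show SD.mk (_ ^ (0 : ℕ)) (_ ^ (1 : ℤ)) = _
      rw [pow_zero, zpow_one]
  | inv_of x _ =>
      rw [fg_of_inv, sgXinv, Psi,
        Monoid.CoprodI.lift_of]
      show SD.mk (_ ^ (0 : ℕ)) (_ ^ (-1 : ℤ)) = _
      rw [pow_zero, zpow_neg_one]
  | mul g h ihg ihh =>
      rw [map_mul, map_mul, ihg, ihh, SD.mul_def]
      simp [A]

lemma Psi_y (y : YhatSet X) : Psi (y : SGMonoid X) = ⟨FreeMonoid.of y, 1⟩ := by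
  obtain ⟨g, x, hy⟩ := y.2
  have : (y : SGMonoid X) = freeGroupToSG g * sgXhat x * freeGroupToSG g⁻¹ := hy
  rw [this, map_mul, map_mul, Psi_fg, Psi_hat, Psi_fg, SD.mul_def, SD.mul_def]
  simp only [A, map_one, one_mul, mul_one, FreeMonoid.map_of, mul_inv_cancel]
  congr 1
  congr 1
  apply Subtype.ext
  rw [conjAct_val, hatGen_val]
  exact hy.symm

lemma Psi_lift (w : FreeMonoid (YhatSet X)) :
    Psi (FreeMonoid.lift (fun y : YhatSet X => (y : SGMonoid X)) w) = ⟨w, 1⟩ := by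
  induction w using FreeMonoid.inductionOn' with
  | one => rw [map_one, map_one]; rfl
  | of_mul y w ih =>
      rw [map_mul, map_mul, FreeMonoid.lift_eval_of, Psi_y, ih, SD.mul_def]
      simp [A_one]

lemma lift_A (g : FreeGroup X) (w : FreeMonoid (YhatSet X)) :
    FreeMonoid.lift (fun y : YhatSet X => (y : SGMonoid X)) (A g w) =
      freeGroupToSG g * FreeMonoid.lift (fun y : YhatSet X => (y : SGMonoid X)) w *
        freeGroupToSG g⁻¹ := by
  induction w using FreeMonoid.inductionOn' with
  | one => rw [map_one, map_one, mul_one, fg_mul_inv]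
  | of_mul y w ih =>
      simp only [map_mul, A, FreeMonoid.map_of, FreeMonoid.lift_eval_of]
      rw [show (FreeMonoid.map (conjAct g)) w = A g w from rfl, ih,
        show ((conjAct g y : YhatSet X) : SGMonoid X) =
          freeGroupToSG g * (y : SGMonoid X) * freeGroupToSG g⁻¹ from rfl]
      simp [mul_assoc]

/-- The multiplication homomorphism `F⁺(Ŷ) ⋊ F(X) → SG`. -/
def mulHom : SD X →* SGMonoid X where
  toFun p := FreeMonoid.lift (fun y : YhatSet X => (y : SGMonoid X)) p.w * freeGroupToSG p.g
  map_one' := by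
    show FreeMonoid.lift _ (1 : FreeMonoid (YhatSet X)) * freeGroupToSG 1 = 1
    rw [map_one, map_one, mul_one]
  map_mul' p q := by
    show FreeMonoid.lift _ (p.w * A p.g q.w) * freeGroupToSG (p.g * q.g) = _
    rw [map_mul, lift_A, map_mul]
    simp [mul_assoc]

lemma mulHom_Psi (s : SGMonoid X) : mulHom (Psi s) = s := by
  have : (mulHom : SD X →* SGMonoid X).comp Psi = MonoidHom.id (SGMonoid X) := by
    apply Monoid.CoprodI.ext_hom
    intro x
    apply MonoidHom.ext
    intro p
    show mulHom (Psi (Monoid.CoprodI.of (i := x) p)) = Monoid.CoprodI.of (i := x) p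
    rw [Psi, Monoid.CoprodI.lift_of]
    show FreeMonoid.lift _ (FreeMonoid.of (hatGen x) ^ p.toAdd.2) *
        freeGroupToSG (FreeGroup.of x ^ p.toAdd.1) = _
    rw [map_pow, FreeMonoid.lift_eval_of, hatGen_val, fg_pow, sgXhat,
      ← map_pow, ← ofAdd_nsmul, ← map_mul, ← ofAdd_add]
    norm_num
  calc mulHom (Psi s) = ((mulHom : SD X →* SGMonoid X).comp Psi) s := rfl
    _ = s := by rw [this]; rfl

end SGAux

open SGAux in
/-- **Lemma 4.4.** `SG = F⁺(Ŷ) ⋊ F(X)`: every element of `SG` is uniquely a product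
`w · g` with `w` in the free monoid on `Ŷ` and `g ∈ F(X)`, i.e. the multiplication map
`F⁺(Ŷ) × F(X) → SG` is a bijection. (The set `Ŷ` is invariant under conjugation by
`F(X)`, so this is exactly the semidirect product decomposition for the conjugation
action of `F(X)` on `F⁺(Ŷ)`.) -/
theorem sg_semidirect (X : Type*) :
    Function.Bijective (fun p : FreeMonoid (YhatSet X) × FreeGroup X =>
      (FreeMonoid.lift (fun y : YhatSet X => (y : SGMonoid X))) p.1 *
        freeGroupToSG p.2) := by
  constructor
  · intro p q h
    have hp := congrArg Psi h
    simp only [map_mul, Psi_fg, Psi_lift, SD.mul_def, A_one, mul_one, one_mul] at hp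
    obtain ⟨h1, h2⟩ := SD.mk.injEq _ _ _ _ ▸ hp
    exact Prod.ext h1 h2
  · intro s
    exact ⟨⟨(Psi s).w, (Psi s).g⟩, mulHom_Psi s⟩
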